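/- Let n ≥ 2 be a natural number and consider the word (k aⁿ)ⁿ, i.e., the list of letters consisting of n consecutive blocks k a a … a (each block one letter k followed by n letters a), which is freely reduced and has length n(n+1). If this list is written as a concatenation w₁ w₂ … w_l of l lists with l² ≤ n, then at least one of the lists w_j contains k aⁿ k (one letter k, followed by n letters a, followed by one letter k) as a contiguous sublist. -/

import Mathlib

lemma infix_extract {α : Type*} (p1 w s1 p2 v s2 : List α)
    (h : p1 ++ w ++ s1 = p2 ++ v ++ s2)
    (h1 : p1.length ≤ p2.length)
    (h2 : p2.length + v.length ≤ p1.length + w.length) :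
    ∃ p s, w = p ++ v ++ s := by
  set d := p2.length - p1.length with hd
  have key : v = (w.drop d).take v.length := by
    have e1 : ((p2 ++ v ++ s2).drop p2.length).take v.length = v := by
      rw [List.append_assoc, List.drop_append]
      simp
    rw [← e1, ← h, List.append_assoc, List.drop_append,
        List.drop_eq_nil_of_le h1, List.nil_append,
        List.drop_append, List.take_append]
    have hlen : v.length ≤ (w.drop d).length := by
      rw [List.length_drop]; omega
    rw [Nat.sub_eq_zero_of_le hlen]
    simp
    rw [← hd, Nat.min_eq_left (by rw [List.length_drop] at hlen; exact hlen)]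
  refine ⟨w.take d, (w.drop d).drop v.length, ?_⟩
  calc w = w.take d ++ w.drop d := (List.take_append_drop d w).symm
    _ = w.take d ++ ((w.drop d).take v.length ++ (w.drop d).drop v.length) :=
        congrArg (w.take d ++ ·) (List.take_append_drop v.length (w.drop d)).symm
    _ = w.take d ++ (v ++ (w.drop d).drop v.length) := by rw [← key]
    _ = w.take d ++ v ++ (w.drop d).drop v.length := by rw [List.append_assoc]

/-- Words over the two-letter alphabet `{k, a}` are lists over `Fin 2`, with `k = 0`
and `a = 1`. If the word `(k aⁿ)ⁿ` (for `n ≥ 2`) is written as a concatenation of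
`l` lists with `l² ≤ n`, then one of the lists contains `k aⁿ k` as a contiguous
sublist. -/
theorem piece_contains_kank (n : ℕ) (hn : 2 ≤ n) (ws : List (List (Fin 2)))
    (hflat : ws.flatten = (List.replicate n ((0 : Fin 2) :: List.replicate n 1)).flatten)
    (hl : ws.length ^ 2 ≤ n) :
    ∃ w ∈ ws, ∃ p s : List (Fin 2),
      w = p ++ ((0 : Fin 2) :: (List.replicate n 1 ++ [0])) ++ s := by
  set B : List (Fin 2) := (0 : Fin 2) :: List.replicate n 1 with hB
  have hBlen : B.length = n + 1 := by simp [hB]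
  have hWlen : (List.replicate n B).flatten.length = n * (n + 1) := by
    simp [List.length_flatten, List.map_replicate, hBlen]
  have hlensum : ws.flatten.length = n * (n + 1) := by rw [hflat]; exact hWlen
  have hl1 : 1 ≤ ws.length := by
    rcases ws with _ | ⟨a, t⟩
    · simp at hlensum; omega
    · simp
  have h2l : 2 * ws.length ≤ n := by
    rcases Nat.lt_or_ge ws.length 2 with h | h
    · omega
    · calc 2 * ws.length ≤ ws.length * ws.length := by nlinarith
        _ = ws.length ^ 2 := (sq ws.length).symm
        _ ≤ n := hl
  have hbig : ∃ w ∈ ws, 2 * n + 2 ≤ w.length := by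
    by_contra hcon
    push_neg at hcon
    have hsum : (ws.map List.length).sum ≤ ws.length * (2 * n + 1) := by
      have := List.sum_le_card_nsmul (ws.map List.length) (2 * n + 1) (by
        intro x hx
        simp only [List.mem_map] at hx
        obtain ⟨w, hw, rfl⟩ := hx
        have := hcon w hw
        omega)
      simpa [smul_eq_mul, mul_comm] using this
    rw [List.length_flatten] at hlensum
    nlinarith
  obtain ⟨w, hw, hwlen⟩ := hbig
  refine ⟨w, hw, ?_⟩
  obtain ⟨l1, l2, rfl⟩ := List.append_of_mem hw
  have hflat' : l1.flatten ++ w ++ l2.flatten = (List.replicate n B).flatten := by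
    simpa using hflat
  set q := l1.flatten.length with hq
  have hqbound : q + w.length + l2.flatten.length = n * (n + 1) := by
    have h := congrArg List.length hflat'
    rw [List.length_append, List.length_append, hWlen] at h
    exact h
  set i := (q + n) / (n + 1) with hi
  have hdm : i * (n + 1) + (q + n) % (n + 1) = q + n := by
    rw [hi, mul_comm]; exact Nat.div_add_mod _ _
  have hmod : (q + n) % (n + 1) < n + 1 := Nat.mod_lt _ (by omega)
  have hile : i * (n + 1) ≤ q + n := by omega
  have hige : q ≤ i * (n + 1) := by omega
  have hmul : n * (n + 1) = n * n + n := by ring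
  clear_value i
  clear hi hdm hmod
  have hi2 : i + 2 ≤ n := by
    by_contra hcon
    push_neg at hcon
    have h1 : (n - 1) * (n + 1) ≤ i * (n + 1) := Nat.mul_le_mul_right _ (by omega)
    have h2 : (n - 1) * (n + 1) + 1 = n * n := by
      cases n with
      | zero => omega
      | succ k => simp only [Nat.succ_sub_one]; ring
    omega
  have hdecomp : (List.replicate n B).flatten =
      (List.replicate i B).flatten ++ ((0 : Fin 2) :: (List.replicate n 1 ++ [0])) ++
        (List.replicate n (1 : Fin 2) ++ (List.replicate (n - i - 2) B).flatten) := by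
    have hn' : n = i + (2 + (n - i - 2)) := by omega
    conv_lhs => rw [hn', List.replicate_add, List.replicate_add]
    simp [List.flatten_append, hB]
  have hplen : (List.replicate i B).flatten.length = i * (n + 1) := by
    simp [List.length_flatten, List.map_replicate, hBlen]
  exact infix_extract l1.flatten w l2.flatten (List.replicate i B).flatten
    ((0 : Fin 2) :: (List.replicate n 1 ++ [0]))
    (List.replicate n (1 : Fin 2) ++ (List.replicate (n - i - 2) B).flatten)
    (by rw [hflat', hdecomp]) (by omega) (by
      rw [hplen]
      simp only [List.length_cons, List.length_append, List.length_replicate, List.length_nil]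
      omega)
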